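/- Let k be a perfect field of characteristic p, let S = k[x_1,…,x_n] be the polynomial ring, let e ≥ 1, and let I and J be ideals of S. Then J ⊆ I^{[p^e]} if and only if for every p^{-e}-linear map φ : S → S and every x ∈ J one has φ(x) ∈ I. -/

import Mathlib

open MvPolynomial

/-- The `q`-th Frobenius power `I^{[q]}` of an ideal: the ideal generated by the
`q`-th powers of the elements of `I`. -/
def frobeniusPower {S : Type*} [CommSemiring S] (I : Ideal S) (q : ℕ) : Ideal S :=
  Ideal.span ((fun a => a ^ q) '' (I : Set S))

section Aux

variable {k : Type*} [Field k] {n : ℕ}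

/-- The `α`-component map in the decomposition `f = ∑_α (f_α)^q • x^α`. -/
noncomputable def fpComp (q : ℕ) (ψ : k ≃+* k) (α : Fin n →₀ ℕ)
    (f : MvPolynomial (Fin n) k) : MvPolynomial (Fin n) k :=
  ∑ d ∈ f.support, if ∀ i, d i % q = α i then
    monomial (Finsupp.mapRange (· / q) (Nat.zero_div q) d) (ψ (coeff d f)) else 0

lemma fpComp_coeff (q : ℕ) (ψ : k ≃+* k) (hq0 : 0 < q) (α : Fin n →₀ ℕ)
    (hα : ∀ i, α i < q) (f : MvPolynomial (Fin n) k) (m : Fin n →₀ ℕ) :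
    coeff m (fpComp q ψ α f) = ψ (coeff (q • m + α) f) := by
  classical
  rw [fpComp, coeff_sum]
  have key : ∀ d ∈ f.support, (coeff m (if ∀ i, d i % q = α i then
      monomial (Finsupp.mapRange (· / q) (Nat.zero_div q) d) (ψ (coeff d f)) else 0))
      = if d = q • m + α then ψ (coeff d f) else 0 := by
    intro d _
    by_cases hc : ∀ i, d i % q = α i
    · rw [if_pos hc, coeff_monomial]
      have hiff : (Finsupp.mapRange (· / q) (Nat.zero_div q) d = m) ↔ d = q • m + α := by
        constructor
        · intro h; ext i
          have h1 : d i / q = m i := by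
            have := congrArg (fun g => g i) h
            simpa [Finsupp.mapRange_apply] using this
          have h2 := Nat.div_add_mod (d i) q
          rw [h1, hc i] at h2
          simp only [Finsupp.add_apply, Finsupp.smul_apply, smul_eq_mul]
          omega
        · intro h; ext i
          have hd : d i = q * m i + α i := by
            rw [h]; simp [Finsupp.add_apply, Finsupp.smul_apply]
          rw [Finsupp.mapRange_apply, hd, Nat.mul_add_div hq0, Nat.div_eq_of_lt (hα i),
            add_zero]
      exact if_congr hiff rfl rfl
    · rw [if_neg hc, coeff_zero, if_neg]
      intro h
      apply hc
      intro i
      have hd : d i = q * m i + α i := by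
        rw [h]; simp [Finsupp.add_apply, Finsupp.smul_apply]
      rw [hd, Nat.mul_add_mod, Nat.mod_eq_of_lt (hα i)]
  rw [Finset.sum_congr rfl key,
    Finset.sum_ite_eq' f.support (q • m + α) (fun d => ψ (coeff d f))]
  by_cases hmem : q • m + α ∈ f.support
  · rw [if_pos hmem]
  · rw [if_neg hmem, notMem_support_iff.mp hmem, map_zero]

lemma fpComp_add (q : ℕ) (ψ : k ≃+* k) (hq0 : 0 < q) (α : Fin n →₀ ℕ)
    (hα : ∀ i, α i < q) (f g : MvPolynomial (Fin n) k) :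
    fpComp q ψ α (f + g) = fpComp q ψ α f + fpComp q ψ α g := by
  ext m
  simp [fpComp_coeff q ψ hq0 α hα, coeff_add, map_add]

lemma fpComp_pow_mul (q : ℕ) (ψ : k ≃+* k) {p e : ℕ} [Fact p.Prime] [CharP k p]
    (hq : q = p ^ e) (hψ : ∀ c : k, ψ (c ^ q) = c)
    (α : Fin n →₀ ℕ) (hα : ∀ i, α i < q) (r f : MvPolynomial (Fin n) k) :
    fpComp q ψ α (r ^ q * f) = r * fpComp q ψ α f := by
  have hq0 : 0 < q := by rw [hq]; exact pow_pos (Fact.out : p.Prime).pos e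
  induction r using MvPolynomial.induction_on' with
  | monomial s c =>
    rw [monomial_pow]
    ext m
    rw [fpComp_coeff q ψ hq0 α hα, coeff_monomial_mul', coeff_monomial_mul']
    by_cases hsm : s ≤ m
    · have h1 : q • s ≤ q • m + α := by
        rw [Finsupp.le_def]; intro i
        simp only [Finsupp.smul_apply, Finsupp.add_apply, smul_eq_mul]
        exact le_add_right (Nat.mul_le_mul_left q (Finsupp.le_def.mp hsm i))
      have h2 : q • m + α - q • s = q • (m - s) + α := by
        ext i
        have := Finsupp.le_def.mp hsm i
        simp only [Finsupp.tsub_apply, Finsupp.add_apply, Finsupp.smul_apply, smul_eq_mul]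
        have h3 : q * m i = q * s i + q * (m i - s i) := by
          rw [← Nat.mul_add]
          congr 1
          omega
        omega
      rw [if_pos hsm, if_pos h1, h2, map_mul, hψ, fpComp_coeff q ψ hq0 α hα]
    · have h1 : ¬ (q • s ≤ q • m + α) := by
        intro hle
        apply hsm
        rw [Finsupp.le_def]; intro i
        have h2 := Finsupp.le_def.mp hle i
        simp only [Finsupp.smul_apply, Finsupp.add_apply, smul_eq_mul] at h2
        have h3 := hα i
        by_contra hc
        push_neg at hc
        have h4 : q * (m i + 1) ≤ q * s i := Nat.mul_le_mul_left q hc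
        have h5 : q * (m i + 1) = q * m i + q := by ring
        omega
      rw [if_neg hsm, if_neg h1, map_zero]
  | add r1 r2 ih1 ih2 =>
    have h1 : (r1 + r2) ^ q = r1 ^ q + r2 ^ q := by
      subst hq; exact add_pow_char_pow _ _ p e
    rw [h1, add_mul, fpComp_add q ψ hq0 α hα, ih1, ih2, add_mul]

lemma coeff_pow_smul (q : ℕ) {p e : ℕ} [Fact p.Prime] [CharP k p] (hq : q = p ^ e)
    (g : MvPolynomial (Fin n) k) (m : Fin n →₀ ℕ) :
    coeff (q • m) (g ^ q) = (coeff m g) ^ q := by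
  have hq0 : 0 < q := by rw [hq]; exact pow_pos (Fact.out : p.Prime).pos e
  induction g using MvPolynomial.induction_on' with
  | monomial s c =>
    rw [monomial_pow, coeff_monomial, coeff_monomial]
    by_cases h : s = m
    · rw [if_pos (by rw [h]), if_pos h]
    · rw [if_neg, if_neg h, zero_pow hq0.ne']
      intro hsm
      apply h
      ext i
      have := congrArg (fun g => g i) hsm
      simp only [Finsupp.smul_apply, smul_eq_mul] at this
      exact Nat.eq_of_mul_eq_mul_left hq0 this
  | add g1 g2 ih1 ih2 =>
    have h1 : (g1 + g2) ^ q = g1 ^ q + g2 ^ q := by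
      subst hq; exact add_pow_char_pow _ _ p e
    have h2 : (coeff m g1 + coeff m g2) ^ q = coeff m g1 ^ q + coeff m g2 ^ q := by
      subst hq; exact add_pow_char_pow _ _ p e
    rw [h1, coeff_add, coeff_add, h2, ih1, ih2]

lemma coeff_pow_ne (q : ℕ) {p e : ℕ} [Fact p.Prime] [CharP k p] (hq : q = p ^ e)
    (g : MvPolynomial (Fin n) k) (d : Fin n →₀ ℕ) (hd : ¬ ∀ i, d i % q = 0) :
    coeff d (g ^ q) = 0 := by
  induction g using MvPolynomial.induction_on' with
  | monomial s c =>
    rw [monomial_pow, coeff_monomial, if_neg]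
    intro h
    apply hd
    intro i
    have hdi : d i = q * s i := by
      rw [← h]; simp [Finsupp.smul_apply]
    rw [hdi, Nat.mul_mod_right]
  | add g1 g2 ih1 ih2 =>
    have h1 : (g1 + g2) ^ q = g1 ^ q + g2 ^ q := by
      subst hq; exact add_pow_char_pow _ _ p e
    rw [h1, coeff_add, ih1, ih2, add_zero]

lemma fpComp_reconstruct (q : ℕ) (ψ : k ≃+* k) {p e : ℕ} [Fact p.Prime] [CharP k p]
    (hq : q = p ^ e) (hψ' : ∀ c : k, (ψ c) ^ q = c) (f : MvPolynomial (Fin n) k) :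
    f = ∑ α ∈ Finset.Iic (Finsupp.equivFunOnFinite.symm fun _ : Fin n => q - 1),
        (fpComp q ψ α f) ^ q * monomial α 1 := by
  classical
  have hq0 : 0 < q := by rw [hq]; exact pow_pos (Fact.out : p.Prime).pos e
  ext d
  rw [coeff_sum]
  set α₀ : Fin n →₀ ℕ := Finsupp.mapRange (· % q) (Nat.zero_mod q) d with hα₀def
  have hα₀i : ∀ i, α₀ i = d i % q := fun i => Finsupp.mapRange_apply
  have hα₀lt : ∀ i, α₀ i < q := fun i => by rw [hα₀i i]; exact Nat.mod_lt _ hq0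
  have hmem : α₀ ∈ Finset.Iic (Finsupp.equivFunOnFinite.symm fun _ : Fin n => q - 1) := by
    rw [Finset.mem_Iic, Finsupp.le_def]
    intro i
    rw [Finsupp.coe_equivFunOnFinite_symm]
    have := hα₀lt i
    omega
  rw [Finset.sum_eq_single α₀ ?_ (fun h => absurd hmem h)]
  · rw [coeff_mul_monomial', if_pos, mul_one]
    · set m₀ : Fin n →₀ ℕ := Finsupp.mapRange (· / q) (Nat.zero_div q) d with hm₀def
      have hm₀i : ∀ i, m₀ i = d i / q := fun i => Finsupp.mapRange_apply
      have hsub : d - α₀ = q • m₀ := by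
        ext i
        have := Nat.div_add_mod (d i) q
        simp only [Finsupp.tsub_apply, Finsupp.smul_apply, smul_eq_mul, hα₀i i, hm₀i i]
        omega
      have hdec : q • m₀ + α₀ = d := by
        ext i
        have := Nat.div_add_mod (d i) q
        simp only [Finsupp.add_apply, Finsupp.smul_apply, smul_eq_mul, hα₀i i, hm₀i i]
        omega
      rw [hsub, coeff_pow_smul q hq, fpComp_coeff q ψ hq0 α₀ hα₀lt, hdec, hψ']
    · rw [Finsupp.le_def]
      intro i
      rw [hα₀i i]
      exact Nat.mod_le _ _
  · intro b hb hbne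
    rw [coeff_mul_monomial']
    by_cases hbd : b ≤ d
    · rw [if_pos hbd]
      have hblt : ∀ i, b i < q := by
        intro i
        rw [Finset.mem_Iic, Finsupp.le_def] at hb
        have := hb i
        rw [Finsupp.coe_equivFunOnFinite_symm] at this
        omega
      rw [coeff_pow_ne q hq, zero_mul]
      intro hall
      apply hbne
      ext i
      obtain ⟨t, ht⟩ := Nat.dvd_of_mod_eq_zero (hall i)
      rw [Finsupp.tsub_apply] at ht
      have hbi := Finsupp.le_def.mp hbd i
      have hdi : d i = q * t + b i := by omega
      rw [hα₀i i, hdi, Nat.mul_add_mod, Nat.mod_eq_of_lt (hblt i)]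
    · rw [if_neg hbd]

end Aux

/-- For ideals `I`, `J` of `S = k[x_1,…,x_n]` over a perfect field `k` of
characteristic `p`, one has `J ⊆ I^{[p^e]}` iff `φ(J) ⊆ I` for every
`p^{-e}`-linear map `φ : S → S`. -/
theorem subset_frobeniusPower_iff {k : Type*} [Field k] [PerfectField k]
    (p : ℕ) [Fact p.Prime] [CharP k p] (n e : ℕ) (he : 1 ≤ e)
    (I J : Ideal (MvPolynomial (Fin n) k)) :
    J ≤ frobeniusPower I (p ^ e) ↔
      ∀ φ : MvPolynomial (Fin n) k → MvPolynomial (Fin n) k,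
        (∀ x y, φ (x + y) = φ x + φ y) →
        (∀ r x, φ (r ^ p ^ e * x) = r * φ x) →
        ∀ x ∈ J, φ x ∈ I := by
  classical
  have hq0 : 0 < p ^ e := pow_pos (Fact.out : p.Prime).pos e
  constructor
  · intro hJI φ hadd hlin x hx
    have h0 : φ 0 = 0 := by
      have h := hadd 0 0
      rw [add_zero] at h
      exact (left_eq_add.mp h)
    have key : ∀ y ∈ frobeniusPower I (p ^ e), ∀ r, φ (r * y) ∈ I := by
      intro y hy
      induction hy using Submodule.span_induction with
      | mem z hz =>
        obtain ⟨a, haI, rfl⟩ := hz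
        intro r
        rw [mul_comm, hlin a r]
        exact Ideal.mul_mem_right _ I haI
      | zero =>
        intro r
        rw [mul_zero, h0]
        exact I.zero_mem
      | add y z _ _ ihy ihz =>
        intro r
        rw [mul_add, hadd]
        exact I.add_mem (ihy r) (ihz r)
      | smul a y _ ihy =>
        intro r
        rw [smul_eq_mul, ← mul_assoc]
        exact ihy (r * a)
    have := key x (hJI hx) 1
    rwa [one_mul] at this
  · intro h x hx
    set ψ := (iterateFrobeniusEquiv k p e).symm with hψdef
    have hψq : ∀ c : k, ψ (c ^ p ^ e) = c := by
      intro c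
      have h1 := (iterateFrobeniusEquiv k p e).symm_apply_apply c
      rwa [iterateFrobeniusEquiv_apply, iterateFrobenius_def] at h1
    have hψq' : ∀ c : k, (ψ c) ^ p ^ e = c := by
      intro c
      have h1 := (iterateFrobeniusEquiv k p e).apply_symm_apply c
      rwa [iterateFrobeniusEquiv_apply, iterateFrobenius_def] at h1
    have hcomp : ∀ α : Fin n →₀ ℕ, (∀ i, α i < p ^ e) → fpComp (p ^ e) ψ α x ∈ I := by
      intro α hα
      exact h (fpComp (p ^ e) ψ α) (fpComp_add (p ^ e) ψ hq0 α hα)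
        (fpComp_pow_mul (p ^ e) ψ rfl hψq α hα) x hx
    rw [fpComp_reconstruct (p ^ e) ψ rfl hψq' x]
    apply Ideal.sum_mem
    intro α hαmem
    have hα : ∀ i, α i < p ^ e := by
      rw [Finset.mem_Iic, Finsupp.le_def] at hαmem
      intro i
      have := hαmem i
      rw [Finsupp.coe_equivFunOnFinite_symm] at this
      omega
    rw [mul_comm]
    exact Ideal.mul_mem_left _ _ (Ideal.subset_span ⟨fpComp (p ^ e) ψ α x, hcomp α hα, rfl⟩)
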